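/- Let L be a list of jobs with processing times in ℕ × ℕ and let L' be a sublist (subsequence) of L. Then the two-machine flow shop makespan of L' is less than or equal to the makespan of L. Moreover, for each position k in L', the completion time on the second machine of the k-th job of L' is less than or equal to the completion time on the second machine of that same job in L. -/

import Mathlib

/-- One step of the two-machine flow shop recursion: the state `(A, D)` records
the completion time `A` on the first machine and `D` on the second machine;
processing a job `(a, b)` updates it to `(A + a, max D (A + a) + b)`,
i.e. `D_k = max (D_{k-1}) (A_k) + b_k`. -/
def flowStep (s : ℕ × ℕ) (p : ℕ × ℕ) : ℕ × ℕ :=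
  (s.1 + p.1, max s.2 (s.1 + p.1) + p.2)

/-- Two-machine flow shop makespan of a list of jobs, i.e. the completion time
on the second machine of the last job (`0` for the empty list). -/
def makespanD (L : List (ℕ × ℕ)) : ℕ := (L.foldl flowStep (0, 0)).2

/-- If `L'` is a sublist of `L` (witnessed by a strictly
monotone embedding `f` of positions with matching jobs), then the makespan of
`L'` is at most the makespan of `L`, and the completion time on the second
machine of the `k`-th job of `L'` is at most the completion time on the second
machine of that same job (position `f k`) in `L`. -/
lemma foldl_flow_mono : ∀ (L : List (ℕ × ℕ)) (s t : ℕ × ℕ),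
    s.1 ≤ t.1 → s.2 ≤ t.2 →
    (L.foldl flowStep s).1 ≤ (L.foldl flowStep t).1 ∧
    (L.foldl flowStep s).2 ≤ (L.foldl flowStep t).2 := by
  intro L
  induction L with
  | nil => intro s t h1 h2; exact ⟨h1, h2⟩
  | cons p L ih =>
    intro s t h1 h2
    apply ih
    · simp [flowStep]; omega
    · simp [flowStep]; omega

lemma foldl_flow_sublist {L' L : List (ℕ × ℕ)} (h : List.Sublist L' L) :
    ∀ s : ℕ × ℕ,
    (L'.foldl flowStep s).1 ≤ (L.foldl flowStep s).1 ∧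
    (L'.foldl flowStep s).2 ≤ (L.foldl flowStep s).2 := by
  induction h with
  | slnil => intro s; exact ⟨le_rfl, le_rfl⟩
  | @cons l₁ l₂ a _ ih =>
    intro s
    have h1 := ih s
    have h2 := foldl_flow_mono l₂ s (flowStep s a)
      (by simp [flowStep]) (by simp [flowStep]; omega)
    simp only [List.foldl_cons]
    exact ⟨h1.1.trans h2.1, h1.2.trans h2.2⟩
  | @cons_cons l₁ l₂ a _ ih =>
    intro s
    simpa using ih (flowStep s a)

lemma makespan_sublist {L' L : List (ℕ × ℕ)} (h : List.Sublist L' L) :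
    makespanD L' ≤ makespanD L := (foldl_flow_sublist h (0,0)).2

theorem sublist_makespan_le (L L' : List (ℕ × ℕ))
    (f : Fin L'.length → Fin L.length) (hf : StrictMono f)
    (hjobs : ∀ i : Fin L'.length, L'.get i = L.get (f i)) :
    makespanD L' ≤ makespanD L ∧
      ∀ k : Fin L'.length,
        makespanD (L'.take ((k : ℕ) + 1)) ≤ makespanD (L.take ((f k : ℕ) + 1)) := by
  constructor
  · exact makespan_sublist
      (List.sublist_iff_exists_fin_orderEmbedding_get_eq.2
        ⟨OrderEmbedding.ofStrictMono f hf, hjobs⟩)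
  · intro k
    apply makespan_sublist
    rw [List.sublist_iff_exists_fin_orderEmbedding_get_eq]
    have hlen' : (L'.take ((k : ℕ) + 1)).length = (k : ℕ) + 1 := by
      simp
    have hlen : (L.take ((f k : ℕ) + 1)).length = (f k : ℕ) + 1 := by
      simp
    have hi' : ∀ i : Fin (L'.take ((k : ℕ) + 1)).length, (i : ℕ) < L'.length := by
      intro i
      have h1 := i.isLt.trans_le (List.length_take_le _ _)
      have h2 := k.isLt
      omega
    have hmap : ∀ i : Fin (L'.take ((k : ℕ) + 1)).length,
        (f ⟨i, hi' i⟩ : ℕ) < (L.take ((f k : ℕ) + 1)).length := by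
      intro i
      rw [hlen]
      have hik := i.isLt.trans_le (List.length_take_le _ _)
      have hle : (⟨(i:ℕ), hi' i⟩ : Fin L'.length) ≤ k := by
        simp only [Fin.le_def]; omega
      have := hf.monotone hle
      rw [Fin.le_def] at this
      omega
    refine ⟨OrderEmbedding.ofStrictMono (fun i => ⟨f ⟨i, hi' i⟩, hmap i⟩) ?_, ?_⟩
    · intro i j hij
      simp only [Fin.mk_lt_mk]
      have h1 : ((i:ℕ)) < (j:ℕ) := hij
      have h2 : (⟨(i:ℕ), hi' i⟩ : Fin L'.length) < ⟨(j:ℕ), hi' j⟩ := h1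
      exact hf h2
    · intro i
      simp only [OrderEmbedding.coe_ofStrictMono, List.get_eq_getElem]
      rw [List.getElem_take, List.getElem_take]
      have h := hjobs ⟨i, hi' i⟩
      simp only [List.get_eq_getElem] at h
      exact h
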